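/- Let $\mathcal U(\mathbf U)=-\rho s/(\gamma-1)$ with $s=\ln(p\rho^{-\gamma})$, where $p=(\gamma-1)(\mathcal E-\frac{\|\mathbf m\|^2}{2\rho}-\frac{\|\mathbf B\|^2}{2})$ and $\mathbf U=(\rho,\mathbf m,\mathcal E,\mathbf B)$ with $\mathbf m=\rho\mathbf u$. On the set where $\rho>0$ and $p>0$, the gradient of $\mathcal U$ with respect to the conservative variables is $\mathbf V=\left(\frac{\gamma-s}{\gamma-1}-\beta\|\mathbf u\|^2,\ 2\beta\mathbf u,\ -2\beta,\ 2\beta\mathbf B\right)$, where $\beta=\rho/(2p)$. -/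

import Mathlib

/-- Pressure as a function of the conservative variables
`U = (ρ, m, ℰ, B) ∈ ℝ⁸`. -/
noncomputable def mhdPressure (γ : ℝ) (U : Fin 8 → ℝ) : ℝ :=
  (γ - 1) * (U 4 - (U 1 ^ 2 + U 2 ^ 2 + U 3 ^ 2) / (2 * U 0)
    - (U 5 ^ 2 + U 6 ^ 2 + U 7 ^ 2) / 2)

/-- The entropy function `𝒰(U) = -ρ s/(γ-1)` with `s = ln(p ρ^{-γ})`. -/
noncomputable def mhdEntropy (γ : ℝ) (U : Fin 8 → ℝ) : ℝ :=
  -(U 0 * Real.log (mhdPressure γ U * U 0 ^ (-γ))) / (γ - 1)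

private lemma vec8_five {α : Type*} (a0 a1 a2 a3 a4 a5 a6 a7 : α) :
    ![a0,a1,a2,a3,a4,a5,a6,a7] (5 : Fin 8) = a5 := rfl

private lemma vec8_six {α : Type*} (a0 a1 a2 a3 a4 a5 a6 a7 : α) :
    ![a0,a1,a2,a3,a4,a5,a6,a7] (6 : Fin 8) = a6 := rfl

private lemma vec8_seven {α : Type*} (a0 a1 a2 a3 a4 a5 a6 a7 : α) :
    ![a0,a1,a2,a3,a4,a5,a6,a7] (7 : Fin 8) = a7 := rfl

set_option maxHeartbeats 2000000 in
/-- The gradient of the MHD entropy `𝒰 = -ρ s/(γ-1)` with respect to the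
conservative variables is the entropy-variable vector
`V = ((γ-s)/(γ-1) - β‖u‖², 2βu, -2β, 2βB)` with `β = ρ/(2p)`, `u = m/ρ`. -/
theorem mhd_entropy_gradient (γ : ℝ) (hγ : 1 < γ)
    (U : Fin 8 → ℝ) (hρ : 0 < U 0) (hp : 0 < mhdPressure γ U)
    (V : Fin 8 → ℝ)
    (hV : V =
      let ρ := U 0
      let p := mhdPressure γ U
      let s := Real.log (p * ρ ^ (-γ))
      let β := ρ / (2 * p)
      let ux := U 1 / ρ
      let uy := U 2 / ρ
      let uz := U 3 / ρ
      ![(γ - s) / (γ - 1) - β * (ux^2 + uy^2 + uz^2),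
        2 * β * ux, 2 * β * uy, 2 * β * uz,
        -(2 * β),
        2 * β * U 5, 2 * β * U 6, 2 * β * U 7]) :
    ∃ L : (Fin 8 → ℝ) →L[ℝ] ℝ,
      HasFDerivAt (mhdEntropy γ) L U ∧ ∀ W, L W = ∑ i, V i * W i := by
  have hγ1 : γ - 1 ≠ 0 := by linarith
  have hρ' : U 0 ≠ 0 := hρ.ne'
  -- coordinate projections
  have h0 := hasFDerivAt_apply (𝕜 := ℝ) (F' := fun _ : Fin 8 => ℝ) 0 U
  have h1 := hasFDerivAt_apply (𝕜 := ℝ) (F' := fun _ : Fin 8 => ℝ) 1 U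
  have h2 := hasFDerivAt_apply (𝕜 := ℝ) (F' := fun _ : Fin 8 => ℝ) 2 U
  have h3 := hasFDerivAt_apply (𝕜 := ℝ) (F' := fun _ : Fin 8 => ℝ) 3 U
  have h4 := hasFDerivAt_apply (𝕜 := ℝ) (F' := fun _ : Fin 8 => ℝ) 4 U
  have h5 := hasFDerivAt_apply (𝕜 := ℝ) (F' := fun _ : Fin 8 => ℝ) 5 U
  have h6 := hasFDerivAt_apply (𝕜 := ℝ) (F' := fun _ : Fin 8 => ℝ) 6 U
  have h7 := hasFDerivAt_apply (𝕜 := ℝ) (F' := fun _ : Fin 8 => ℝ) 7 U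
  have hden : (2 : ℝ) * U 0 ≠ 0 := by positivity
  have sq1 := (hasDerivAt_pow 2 (U 1)).comp_hasFDerivAt U h1
  have sq2 := (hasDerivAt_pow 2 (U 2)).comp_hasFDerivAt U h2
  have sq3 := (hasDerivAt_pow 2 (U 3)).comp_hasFDerivAt U h3
  have sq5 := (hasDerivAt_pow 2 (U 5)).comp_hasFDerivAt U h5
  have sq6 := (hasDerivAt_pow 2 (U 6)).comp_hasFDerivAt U h6
  have sq7 := (hasDerivAt_pow 2 (U 7)).comp_hasFDerivAt U h7
  have hinv := (hasDerivAt_inv hden).comp_hasFDerivAt U (h0.const_mul 2)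
  have hP' := (((h4.sub
      (((sq1.add sq2).add sq3).mul hinv)).sub
      ((((sq5.add sq6).add sq7)).mul_const (2:ℝ)⁻¹)).const_mul (γ - 1))
  have hP : HasFDerivAt (mhdPressure γ) _ U := hP'
  have hg : HasFDerivAt
      (fun W : Fin 8 → ℝ =>
        -(W 0 * (Real.log (mhdPressure γ W) - γ * Real.log (W 0))) / (γ - 1)) _ U :=
    ((h0.mul ((hP.log hp.ne').sub ((h0.log hρ').const_mul γ))).neg).mul_const (γ - 1)⁻¹
  -- the two functions agree near U
  have hevP : ∀ᶠ W in nhds U, 0 < mhdPressure γ W :=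
    hP.continuousAt.preimage_mem_nhds (Ioi_mem_nhds hp)
  have hev0 : ∀ᶠ W in nhds U, 0 < W 0 :=
    (continuous_apply 0).continuousAt.preimage_mem_nhds (Ioi_mem_nhds hρ)
  have heq : (fun W : Fin 8 → ℝ =>
        -(W 0 * (Real.log (mhdPressure γ W) - γ * Real.log (W 0))) / (γ - 1))
      =ᶠ[nhds U] mhdEntropy γ := by
    filter_upwards [hevP, hev0] with W hWP hW0
    unfold mhdEntropy
    rw [Real.log_mul hWP.ne' (Real.rpow_pos_of_pos hW0 _).ne',
      Real.log_rpow hW0]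
    ring_nf
  have hE := hg.congr_of_eventuallyEq heq.symm
  refine ⟨_, hE, fun W => ?_⟩
  subst hV
  simp only [Fin.sum_univ_eight, Matrix.cons_val_zero, Matrix.cons_val_one, Matrix.head_cons,
    Matrix.cons_val_succ, Matrix.cons_val_two, Matrix.cons_val_three, Matrix.cons_val_four, Matrix.vecHead, Matrix.vecTail, vec8_five, vec8_six, vec8_seven, ContinuousLinearMap.add_apply, ContinuousLinearMap.sub_apply,
    ContinuousLinearMap.smul_apply, ContinuousLinearMap.proj_apply, ContinuousLinearMap.neg_apply,
    ContinuousLinearMap.coe_smul', Pi.smul_apply, smul_eq_mul]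
  rw [Real.log_mul hp.ne' (Real.rpow_pos_of_pos hρ _).ne', Real.log_rpow hρ]
  have hp' : mhdPressure γ U ≠ 0 := hp.ne'
  simp only [Function.comp_apply, Function.comp, Pi.add_apply, Pi.sub_apply, Matrix.cons_val_succ, Matrix.cons_val_zero]
  field_simp
  ring_nf
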